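/- arXiv:1605.05300 — 2 statements merged into one kernel-verified Lean document; each statement's English description precedes it below -/
import Mathlib

section
/- The set {s^{j-1} t^m ds (mod dA), s^j t⁻¹ dt (mod dA), s⁻¹ ds (mod dA) : j ∈ ℤ, m ∈ ℤ, m ≠ 0} is linearly independent over ℂ in Ω_A / dA, where A = ℂ[s, s⁻¹, t, t⁻¹]. -/
set_option maxHeartbeats 1000000
set_option synthInstance.maxHeartbeats 400000


open LaurentPolynomial

noncomputable section

abbrev A2 : Type := LaurentPolynomial (LaurentPolynomial ℂ)

def ss (k : ℤ) : A2 := LaurentPolynomial.T k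
def tt (m : ℤ) : A2 := LaurentPolynomial.C (LaurentPolynomial.T m)

abbrev Ω2 := KaehlerDifferential ℂ A2

def dA : Submodule ℂ Ω2 := Submodule.span ℂ (Set.range (KaehlerDifferential.D ℂ A2))

abbrev Kq := Ω2 ⧸ dA

def mkK : Ω2 →ₗ[ℂ] Kq := dA.mkQ

/-- The candidate basis of `𝒦' = Ω_A/dA`: elements `s^{j-1} t^m ds` (with `m ≠ 0`),
`s^j t⁻¹ dt`, and `s⁻¹ ds`. -/
def basisFamily : (ℤ × {m : ℤ // m ≠ 0}) ⊕ ℤ ⊕ Unit → Kq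
  | Sum.inl (j, m) => mkK ((ss (j - 1) * tt m.val) • KaehlerDifferential.D ℂ A2 (ss 1))
  | Sum.inr (Sum.inl j) => mkK ((ss j * tt (-1)) • KaehlerDifferential.D ℂ A2 (tt 1))
  | Sum.inr (Sum.inr _) => mkK (ss (-1) • KaehlerDifferential.D ℂ A2 (ss 1))

/-! ### Auxiliary constructions -/

abbrev A1 : Type := LaurentPolynomial ℂ

/-- The Euler operator `x ∂ₓ` on Laurent polynomials, as a linear map. -/
def eulerLM (R : Type) [CommRing R] [Algebra ℂ R] :
    LaurentPolynomial R →ₗ[ℂ] LaurentPolynomial R :=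
  (Finsupp.lsum ℂ fun n : ℤ => (n : ℤ) • (AddMonoidAlgebra.lsingle n : R →ₗ[ℂ] LaurentPolynomial R))
    ∘ₗ (AddMonoidAlgebra.coeffLinearEquiv ℂ : LaurentPolynomial R ≃ₗ[ℂ] (ℤ →₀ R)).toLinearMap

lemma eulerLM_single (R : Type) [CommRing R] [Algebra ℂ R] (n : ℤ) (r : R) :
    eulerLM R (AddMonoidAlgebra.single n r) = n • AddMonoidAlgebra.single n r := by
  rw [eulerLM, LinearMap.comp_apply]
  exact Finsupp.lsum_single _ _ _ _

lemma eulerLM_apply (R : Type) [CommRing R] [Algebra ℂ R] (x : LaurentPolynomial R) (b : ℤ) :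
    (eulerLM R x).coeff b = b • (x.coeff b) := by
  induction x using AddMonoidAlgebra.induction_linear with
  | zero => simp
  | add f g hf hg =>
    rw [map_add, AddMonoidAlgebra.coeff_add, Finsupp.add_apply, AddMonoidAlgebra.coeff_add,
      Finsupp.add_apply, hf, hg, smul_add]
  | single n r =>
    rw [eulerLM_single, AddMonoidAlgebra.coeff_smul, Finsupp.smul_apply,
      AddMonoidAlgebra.coeff_single, Finsupp.single_apply]
    by_cases h : n = b
    · subst h; rfl
    · simp [h]

/-- The Euler derivation `x ∂ₓ` on Laurent polynomials. -/
def euler (R : Type) [CommRing R] [Algebra ℂ R] :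
    Derivation ℂ (LaurentPolynomial R) (LaurentPolynomial R) where
  toLinearMap := eulerLM R
  map_one_eq_zero' := by
    rw [show (1 : LaurentPolynomial R) = AddMonoidAlgebra.single (0:ℤ) (1:R) from
      AddMonoidAlgebra.one_def, eulerLM_single]
    simp
  leibniz' a b := by
    induction a using AddMonoidAlgebra.induction_linear with
    | zero => simp
    | add f g hf hg =>
      rw [add_mul (R := LaurentPolynomial R) f g b, map_add, hf, hg, map_add]
      simp only [smul_eq_mul, add_mul, mul_add]
      ring
    | single n r =>
      induction b using AddMonoidAlgebra.induction_linear with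
      | zero => simp
      | add f g hf hg =>
        rw [mul_add (R := LaurentPolynomial R) (AddMonoidAlgebra.single n r) f g,
          map_add, hf, hg, map_add]
        simp only [smul_eq_mul, add_mul, mul_add]
        ring
      | single m s =>
        rw [show ((AddMonoidAlgebra.single n r : LaurentPolynomial R) * AddMonoidAlgebra.single m s)
              = AddMonoidAlgebra.single (n + m) (r * s) from AddMonoidAlgebra.single_mul_single ..,
          eulerLM_single, eulerLM_single, eulerLM_single, smul_eq_mul, smul_eq_mul,
          mul_smul_comm, mul_smul_comm,
          show ((AddMonoidAlgebra.single n r : LaurentPolynomial R) * AddMonoidAlgebra.single m s)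
              = AddMonoidAlgebra.single (n + m) (r * s) from AddMonoidAlgebra.single_mul_single ..,
          show ((AddMonoidAlgebra.single m s : LaurentPolynomial R) * AddMonoidAlgebra.single n r)
              = AddMonoidAlgebra.single (m + n) (s * r) from AddMonoidAlgebra.single_mul_single ..,
          add_smul]
        rw [add_comm m n, mul_comm s r]
        abel

lemma euler_apply (R : Type) [CommRing R] [Algebra ℂ R] (x : LaurentPolynomial R) :
    euler R x = eulerLM R x := rfl

/-- The coefficientwise lift of a derivation on `R` to `R[T;T⁻¹]`, as a linear map. -/
def liftDerLM (R : Type) [CommRing R] [Algebra ℂ R] (d : R →ₗ[ℂ] R) :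
    LaurentPolynomial R →ₗ[ℂ] LaurentPolynomial R :=
  (AddMonoidAlgebra.coeffLinearEquiv ℂ : LaurentPolynomial R ≃ₗ[ℂ] (ℤ →₀ R)).symm.toLinearMap
    ∘ₗ Finsupp.mapRange.linearMap d
    ∘ₗ (AddMonoidAlgebra.coeffLinearEquiv ℂ : LaurentPolynomial R ≃ₗ[ℂ] (ℤ →₀ R)).toLinearMap

lemma liftDerLM_apply (R : Type) [CommRing R] [Algebra ℂ R] (d : R →ₗ[ℂ] R)
    (x : LaurentPolynomial R) (b : ℤ) : (liftDerLM R d x).coeff b = d (x.coeff b) := by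
  rw [liftDerLM]
  exact Finsupp.mapRange_apply (hf := map_zero d)

lemma liftDerLM_single (R : Type) [CommRing R] [Algebra ℂ R] (d : R →ₗ[ℂ] R) (n : ℤ) (r : R) :
    liftDerLM R d (AddMonoidAlgebra.single n r) = AddMonoidAlgebra.single n (d r) := by
  rw [liftDerLM]
  exact congrArg AddMonoidAlgebra.ofCoeff (Finsupp.mapRange_single (hf := map_zero d))

/-- The coefficientwise lift of a derivation on `R` to `R[T;T⁻¹]`. -/
def liftDer (R : Type) [CommRing R] [Algebra ℂ R] (d : Derivation ℂ R R) :
    Derivation ℂ (LaurentPolynomial R) (LaurentPolynomial R) where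
  toLinearMap := liftDerLM R d.toLinearMap
  map_one_eq_zero' := by
    rw [show (1 : LaurentPolynomial R) = AddMonoidAlgebra.single (0:ℤ) (1:R) from
      AddMonoidAlgebra.one_def, liftDerLM_single]
    simp
  leibniz' a b := by
    induction a using AddMonoidAlgebra.induction_linear with
    | zero => simp
    | add f g hf hg =>
      rw [add_mul (R := LaurentPolynomial R) f g b, map_add, hf, hg, map_add]
      simp only [smul_eq_mul, add_mul, mul_add]
      ring
    | single n r =>
      induction b using AddMonoidAlgebra.induction_linear with
      | zero => simp
      | add f g hf hg =>
        rw [mul_add (R := LaurentPolynomial R) (AddMonoidAlgebra.single n r) f g,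
          map_add, hf, hg, map_add]
        simp only [smul_eq_mul, add_mul, mul_add]
        ring
      | single m s =>
        rw [show ((AddMonoidAlgebra.single n r : LaurentPolynomial R) * AddMonoidAlgebra.single m s)
              = AddMonoidAlgebra.single (n + m) (r * s) from AddMonoidAlgebra.single_mul_single ..,
          liftDerLM_single, liftDerLM_single, liftDerLM_single, smul_eq_mul, smul_eq_mul]
        rw [show ∀ x : R, d.toLinearMap x = d x from fun _ => rfl,
          show ∀ x : R, d.toLinearMap x = d x from fun _ => rfl,
          show ∀ x : R, d.toLinearMap x = d x from fun _ => rfl,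
          Derivation.leibniz, smul_eq_mul, smul_eq_mul]
        rw [show (AddMonoidAlgebra.single (n + m) (r * d s + s * d r) : LaurentPolynomial R)
              = AddMonoidAlgebra.single (n + m) (r * d s)
                + AddMonoidAlgebra.single (n + m) (s * d r) from AddMonoidAlgebra.single_add _ _ _,
          show ((AddMonoidAlgebra.single n r : LaurentPolynomial R) * AddMonoidAlgebra.single m (d s))
              = AddMonoidAlgebra.single (n + m) (r * d s) from AddMonoidAlgebra.single_mul_single ..,
          show ((AddMonoidAlgebra.single m s : LaurentPolynomial R) * AddMonoidAlgebra.single n (d r))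
              = AddMonoidAlgebra.single (m + n) (s * d r) from AddMonoidAlgebra.single_mul_single ..,
          add_comm m n]

lemma liftDer_apply (R : Type) [CommRing R] [Algebra ℂ R] (d : Derivation ℂ R R)
    (x : LaurentPolynomial R) : liftDer R d x = liftDerLM R d.toLinearMap x := rfl

/-- `s ∂ₛ` on `A2`. -/
def D1 : Derivation ℂ A2 A2 := euler A1

/-- `t ∂ₜ` on `A2`. -/
def D2 : Derivation ℂ A2 A2 := liftDer A1 (euler ℂ)

/-- Extraction of the coefficient of `s^a t^b`. -/
def coeffF (a b : ℤ) : A2 →ₗ[ℂ] ℂ :=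
  ((Finsupp.lapply b).comp (AddMonoidAlgebra.coeffLinearEquiv ℂ : A1 ≃ₗ[ℂ] (ℤ →₀ ℂ)).toLinearMap
    : A1 →ₗ[ℂ] ℂ).comp ((Finsupp.lapply a).comp
      (AddMonoidAlgebra.coeffLinearEquiv ℂ : A2 ≃ₗ[ℂ] (ℤ →₀ A1)).toLinearMap : A2 →ₗ[ℂ] A1)

lemma coeffF_apply (a b : ℤ) (x : A2) : coeffF a b x = (x.coeff a).coeff b := rfl

lemma coeffF_D1 (a b : ℤ) (x : A2) : coeffF a b (D1 x) = a • coeffF a b x := by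
  rw [coeffF_apply, coeffF_apply, D1, euler_apply, eulerLM_apply, AddMonoidAlgebra.coeff_smul, Finsupp.smul_apply]

lemma coeffF_D2 (a b : ℤ) (x : A2) : coeffF a b (D2 x) = b • coeffF a b x := by
  rw [coeffF_apply, coeffF_apply, D2, liftDer_apply, liftDerLM_apply]
  exact eulerLM_apply ℂ (x.coeff a) b

/-- Evaluation maps on `Ω2`. -/
def L1 : Ω2 →ₗ[ℂ] A2 := (D1.liftKaehlerDifferential).restrictScalars ℂ
def L2 : Ω2 →ₗ[ℂ] A2 := (D2.liftKaehlerDifferential).restrictScalars ℂ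

lemma L1_D (a : A2) : L1 (KaehlerDifferential.D ℂ A2 a) = D1 a :=
  Derivation.liftKaehlerDifferential_comp_D D1 a

lemma L2_D (a : A2) : L2 (KaehlerDifferential.D ℂ A2 a) = D2 a :=
  Derivation.liftKaehlerDifferential_comp_D D2 a

lemma L1_smul_D (x a : A2) :
    L1 (x • KaehlerDifferential.D ℂ A2 a) = x * D1 a := by
  show D1.liftKaehlerDifferential (x • KaehlerDifferential.D ℂ A2 a) = x * D1 a
  rw [map_smul, Derivation.liftKaehlerDifferential_comp_D, smul_eq_mul]

lemma L2_smul_D (x a : A2) :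
    L2 (x • KaehlerDifferential.D ℂ A2 a) = x * D2 a := by
  show D2.liftKaehlerDifferential (x • KaehlerDifferential.D ℂ A2 a) = x * D2 a
  rw [map_smul, Derivation.liftKaehlerDifferential_comp_D, smul_eq_mul]

/-- Index type of the family. -/
abbrev Idx := (ℤ × {m : ℤ // m ≠ 0}) ⊕ ℤ ⊕ Unit

/-- The dual family of functionals on `Ω2`. -/
def phi : Idx → (Ω2 →ₗ[ℂ] ℂ)
  | Sum.inl (j, m) => (coeffF j m.val).comp L1
      - ((j : ℂ) / (m.val : ℂ)) • ((coeffF j m.val).comp L2)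
  | Sum.inr (Sum.inl j) => (coeffF j 0).comp L2
  | Sum.inr (Sum.inr _) => (coeffF 0 0).comp L1

lemma phi_D (i : Idx) (a : A2) : phi i (KaehlerDifferential.D ℂ A2 a) = 0 := by
  cases i with
  | inl jm =>
    obtain ⟨j, m⟩ := jm
    have hm : ((m.val : ℂ)) ≠ 0 := Int.cast_ne_zero.mpr m.prop
    simp only [phi, LinearMap.sub_apply, LinearMap.smul_apply, LinearMap.comp_apply,
      L1_D, L2_D, coeffF_D1, coeffF_D2, smul_eq_mul, zsmul_eq_mul]
    field_simp
    ring
  | inr i =>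
    cases i with
    | inl j =>
      simp only [phi, LinearMap.comp_apply, L2_D, coeffF_D2, zero_smul]
    | inr u =>
      simp only [phi, LinearMap.comp_apply, L1_D, coeffF_D1, zero_smul]

lemma dA_le_ker (i : Idx) : dA ≤ LinearMap.ker (phi i) := by
  rw [dA, Submodule.span_le]
  rintro _ ⟨a, rfl⟩
  exact LinearMap.mem_ker.mpr (phi_D i a)

/-- The dual family descended to the quotient. -/
def phiK (i : Idx) : Kq →ₗ[ℂ] ℂ := dA.liftQ (phi i) (dA_le_ker i)

lemma phiK_mkK (i : Idx) (x : Ω2) : phiK i (mkK x) = phi i x := rfl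

/-! ### Multiplication lemmas -/

lemma ss_def (k : ℤ) : ss k = AddMonoidAlgebra.single k (1 : A1) := rfl

lemma tt_def (m : ℤ) : tt m = AddMonoidAlgebra.single 0 (T m : A1) := rfl

lemma ss_mul_tt (a m : ℤ) : ss a * tt m = AddMonoidAlgebra.single a (T m : A1) := by
  rw [ss_def, tt_def,
    show ((AddMonoidAlgebra.single a (1:A1) : A2) * AddMonoidAlgebra.single 0 (T m))
        = AddMonoidAlgebra.single (a + 0) ((1 : A1) * T m) from AddMonoidAlgebra.single_mul_single ..,
    add_zero, one_mul]

lemma single_mul_ss (a c : ℤ) (p : A1) :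
    (AddMonoidAlgebra.single a p : A2) * ss c = AddMonoidAlgebra.single (a + c) p := by
  rw [ss_def,
    show ((AddMonoidAlgebra.single a p : A2) * AddMonoidAlgebra.single c (1:A1))
        = AddMonoidAlgebra.single (a + c) (p * 1) from AddMonoidAlgebra.single_mul_single ..,
    mul_one]

lemma single_mul_tt (a : ℤ) (p : A1) (m : ℤ) :
    (AddMonoidAlgebra.single a p : A2) * tt m = AddMonoidAlgebra.single a (p * T m) := by
  rw [tt_def,
    show ((AddMonoidAlgebra.single a p : A2) * AddMonoidAlgebra.single 0 (T m : A1))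
        = AddMonoidAlgebra.single (a + 0) (p * T m) from AddMonoidAlgebra.single_mul_single ..,
    add_zero]

lemma D1_ss (k : ℤ) : D1 (ss k) = k • ss k := by
  rw [D1, euler_apply, ss_def, eulerLM_single]

lemma D1_tt (m : ℤ) : D1 (tt m) = 0 := by
  rw [D1, euler_apply, tt_def, eulerLM_single, zero_smul]

lemma D2_ss (k : ℤ) : D2 (ss k) = 0 := by
  rw [D2, liftDer_apply, ss_def, liftDerLM_single]
  rw [show (euler ℂ).toLinearMap (1 : A1) = 0 from (euler ℂ).map_one_eq_zero]
  exact AddMonoidAlgebra.single_zero k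

lemma D2_tt (m : ℤ) : D2 (tt m) = m • tt m := by
  rw [D2, liftDer_apply, tt_def, liftDerLM_single]
  rw [show (euler ℂ).toLinearMap (T m : A1) = m • (T m : A1) by
    rw [show (T m : A1) = AddMonoidAlgebra.single m (1:ℂ) from rfl]
    exact eulerLM_single ℂ m 1]
  exact (AddMonoidAlgebra.smul_single m 0 (T m : A1)).symm

/-! ### Values of the lifts on the basis elements -/

lemma L1_u (j m : ℤ) : L1 ((ss (j - 1) * tt m) • KaehlerDifferential.D ℂ A2 (ss 1))
    = AddMonoidAlgebra.single j (T m : A1) := by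
  rw [L1_smul_D, D1_ss, one_smul, ss_mul_tt, single_mul_ss, sub_add_cancel]

lemma L2_u (j m : ℤ) : L2 ((ss (j - 1) * tt m) • KaehlerDifferential.D ℂ A2 (ss 1)) = 0 := by
  rw [L2_smul_D, D2_ss, mul_zero]

lemma L1_v (j : ℤ) : L1 ((ss j * tt (-1)) • KaehlerDifferential.D ℂ A2 (tt 1)) = 0 := by
  rw [L1_smul_D, D1_tt, mul_zero]

lemma L2_v (j : ℤ) : L2 ((ss j * tt (-1)) • KaehlerDifferential.D ℂ A2 (tt 1))
    = AddMonoidAlgebra.single j (1 : A1) := by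
  rw [L2_smul_D, D2_tt, one_smul, ss_mul_tt, single_mul_tt, ← T_add]
  norm_num

lemma L1_w : L1 (ss (-1) • KaehlerDifferential.D ℂ A2 (ss 1))
    = AddMonoidAlgebra.single 0 (1 : A1) := by
  rw [L1_smul_D, D1_ss, one_smul, ss_def, single_mul_ss]
  norm_num

lemma L2_w : L2 (ss (-1) • KaehlerDifferential.D ℂ A2 (ss 1)) = 0 := by
  rw [L2_smul_D, D2_ss, mul_zero]

/-! ### Coefficient values -/

lemma coeffF_single (a b n : ℤ) (p : A1) :
    coeffF a b (AddMonoidAlgebra.single n p) = if n = a then p.coeff b else 0 := by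
  rw [coeffF_apply, AddMonoidAlgebra.coeff_single, Finsupp.single_apply]
  by_cases h : n = a
  · rw [if_pos h, if_pos h]
  · rw [if_neg h, if_neg h]; rfl

lemma coeffF_single_T (a b n m : ℤ) :
    coeffF a b (AddMonoidAlgebra.single n (T m : A1))
      = if n = a ∧ m = b then 1 else 0 := by
  rw [coeffF_single, show (T m : A1) = AddMonoidAlgebra.single m (1:ℂ) from rfl]
  by_cases h : n = a
  · rw [if_pos h, AddMonoidAlgebra.coeff_single, Finsupp.single_apply]
    by_cases h2 : m = b <;> simp [h, h2]
  · simp [h]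

lemma coeffF_single_one (a b n : ℤ) :
    coeffF a b (AddMonoidAlgebra.single n (1 : A1)) = if n = a ∧ b = 0 then 1 else 0 := by
  rw [show (1 : A1) = T 0 from T_zero.symm, coeffF_single_T]
  exact if_congr (and_congr Iff.rfl eq_comm) rfl rfl

/-! ### Biorthogonality -/

lemma biorth (i k : Idx) : phiK i (basisFamily k) = if i = k then 1 else 0 := by
  cases k with
  | inl jm =>
    obtain ⟨j, m⟩ := jm
    simp only [basisFamily]
    cases i with
    | inl jm' =>
      obtain ⟨j', m'⟩ := jm'
      rw [phiK_mkK]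
      simp only [phi]
      simp only [LinearMap.sub_apply, LinearMap.smul_apply, LinearMap.comp_apply,
        L1_u, L2_u, coeffF_single_T, map_zero, smul_eq_mul, mul_zero, sub_zero]
      by_cases h1 : j = j' <;> by_cases h2 : m.val = m'.val <;>
        simp [h1, h2, Prod.ext_iff, Subtype.ext_iff, eq_comm]
    | inr i =>
      cases i with
      | inl j' =>
        rw [phiK_mkK]
        simp only [phi]
        simp [LinearMap.comp_apply, L2_u]
      | inr u =>
        rw [phiK_mkK]
        simp only [phi]
        simp only [LinearMap.comp_apply, L1_u, coeffF_single_T]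
        have : ¬(j = 0 ∧ m.val = 0) := fun h => m.prop h.2
        simp [this]
  | inr k' =>
    cases k' with
    | inl j =>
      simp only [basisFamily]
      cases i with
      | inl jm' =>
        obtain ⟨j', m'⟩ := jm'
        rw [phiK_mkK]
        simp only [phi]
        simp only [LinearMap.sub_apply, LinearMap.smul_apply, LinearMap.comp_apply,
          L1_v, L2_v, coeffF_single_one, map_zero, smul_eq_mul]
        have : ¬(j = j' ∧ m'.val = 0) := fun h => m'.prop h.2
        simp [this]
      | inr i =>
        cases i with
        | inl j' =>
          rw [phiK_mkK]
          simp only [phi]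
          simp only [LinearMap.comp_apply, L2_v, coeffF_single_one, and_true]
          by_cases h : j = j' <;> simp [h, eq_comm]
        | inr u =>
          rw [phiK_mkK]
          simp only [phi]
          simp [LinearMap.comp_apply, L1_v]
    | inr u =>
      simp only [basisFamily]
      cases i with
      | inl jm' =>
        obtain ⟨j', m'⟩ := jm'
        rw [phiK_mkK]
        simp only [phi]
        simp only [LinearMap.sub_apply, LinearMap.smul_apply, LinearMap.comp_apply,
          L1_w, L2_w, coeffF_single_T, map_zero, smul_eq_mul, mul_zero, sub_zero]
        have : ¬((0:ℤ) = j' ∧ (0:ℤ) = m'.val) := fun h => m'.prop h.2.symm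
        rw [coeffF_single_one]
        have : ¬((0:ℤ) = j' ∧ m'.val = 0) := fun h => m'.prop h.2
        simp [this]
      | inr i =>
        cases i with
        | inl j' =>
          rw [phiK_mkK]
          simp only [phi]
          simp [LinearMap.comp_apply, L2_w]
        | inr u' =>
          rw [phiK_mkK]
          simp only [phi, LinearMap.comp_apply, L1_w, coeffF_single_one]
          simp

theorem stmt2 : LinearIndependent ℂ basisFamily := by
  rw [linearIndependent_iff]
  intro l hl
  ext i
  have h := congrArg (phiK i) hl
  rw [map_zero, Finsupp.linearCombination_apply, map_finsuppSum] at h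
  simp only [map_smul, biorth, smul_eq_mul, mul_ite, mul_one, mul_zero] at h
  rw [Finsupp.sum_ite_eq l i (fun _ a => a)] at h
  simp only [Finsupp.coe_zero, Pi.zero_apply]
  by_cases hi : i ∈ l.support
  · rw [if_pos hi] at h; exact h
  · exact Finsupp.notMem_support_iff.mp hi

end
end

section
/- Let g be a finite dimensional Lie algebra over ℂ with a symmetric invariant bilinear form (·|·), let A = ℂ[s, s⁻¹, t, t⁻¹], and let 𝒦' = Ω_A/dA. Then the bracket [x⊗a, y⊗b] = [x,y]⊗ab + (x|y)·overline{b da}, with 𝒦' central, defines a Lie algebra structure on (g ⊗ A) ⊕ 𝒦'; i.e., the map (a,b) ↦ overline{b da} composed with the form (·|·) is a 2-cocycle on the loop algebra g ⊗ A. -/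
open LaurentPolynomial TensorProduct

noncomputable section

set_option maxHeartbeats 1000000
set_option synthInstance.maxHeartbeats 400000

lemma mkK_D (p : A2) : mkK (KaehlerDifferential.D ℂ A2 p) = 0 := by
  simp only [mkK, Submodule.mkQ_apply, Submodule.Quotient.mk_eq_zero]
  exact Submodule.subset_span ⟨p, rfl⟩

def cmap : A2 →ₗ[ℂ] A2 →ₗ[ℂ] Kq :=
  LinearMap.mk₂ ℂ (fun a b => mkK (b • KaehlerDifferential.D ℂ A2 a))
    (fun a a' b => show mkK (b • KaehlerDifferential.D ℂ A2 (a + a')) =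
        mkK (b • KaehlerDifferential.D ℂ A2 a) + mkK (b • KaehlerDifferential.D ℂ A2 a') from by
      rw [map_add,
        smul_add b (KaehlerDifferential.D ℂ A2 a) (KaehlerDifferential.D ℂ A2 a'), map_add])
    (fun r a b => show mkK (b • KaehlerDifferential.D ℂ A2 (r • a)) =
        r • mkK (b • KaehlerDifferential.D ℂ A2 a) from by
      rw [Derivation.map_smul, ← algebraMap_smul A2 r (KaehlerDifferential.D ℂ A2 a), smul_smul, mul_comm, ← smul_smul, algebraMap_smul, map_smul])
    (fun a b b' => show mkK ((b + b') • KaehlerDifferential.D ℂ A2 a) =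
        mkK (b • KaehlerDifferential.D ℂ A2 a) + mkK (b' • KaehlerDifferential.D ℂ A2 a) from by
      rw [add_smul b b' (KaehlerDifferential.D ℂ A2 a), map_add])
    (fun r a b => show mkK ((r • b) • KaehlerDifferential.D ℂ A2 a) =
        r • mkK (b • KaehlerDifferential.D ℂ A2 a) from by
      rw [smul_assoc r b (KaehlerDifferential.D ℂ A2 a), map_smul])

variable {g : Type} [LieRing g] [LieAlgebra ℂ g]

def tauAux (B : g →ₗ[ℂ] g →ₗ[ℂ] ℂ) : (A2 ⊗[ℂ] g) →ₗ[ℂ] (A2 ⊗[ℂ] g) →ₗ[ℂ] Kq :=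
  TensorProduct.lift <| LinearMap.mk₂ ℂ
    (fun a x => TensorProduct.lift <| LinearMap.mk₂ ℂ
        (fun b y => B x y • cmap a b)
        (fun b b' y => show B x y • cmap a (b + b') = B x y • cmap a b + B x y • cmap a b' from by
          rw [map_add, smul_add])
        (fun r b y => show B x y • cmap a (r • b) = r • (B x y • cmap a b) from by
          rw [map_smul, smul_comm])
        (fun b y y' => show B x (y + y') • cmap a b = B x y • cmap a b + B x y' • cmap a b from by
          rw [map_add, add_smul])
        (fun r b y => show B x (r • y) • cmap a b = r • (B x y • cmap a b) from by
          rw [map_smul, smul_assoc]))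
    (fun a a' x => TensorProduct.ext' fun b y => by
      simp only [lift.tmul, LinearMap.mk₂_apply, LinearMap.add_apply, map_add, smul_add])
    (fun r a x => TensorProduct.ext' fun b y => by
      simp only [lift.tmul, LinearMap.mk₂_apply, LinearMap.smul_apply, map_smul, smul_comm _ r])
    (fun a x x' => TensorProduct.ext' fun b y => by
      simp only [lift.tmul, LinearMap.mk₂_apply, LinearMap.add_apply, map_add, add_smul])
    (fun r a x => TensorProduct.ext' fun b y => by
      simp only [lift.tmul, LinearMap.mk₂_apply, LinearMap.smul_apply, map_smul, smul_assoc])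

lemma tauAux_tmul (B : g →ₗ[ℂ] g →ₗ[ℂ] ℂ) (a b : A2) (x y : g) :
    tauAux B (a ⊗ₜ x) (b ⊗ₜ y) = B x y • mkK (b • KaehlerDifferential.D ℂ A2 a) := by
  rw [tauAux, lift.tmul, LinearMap.mk₂_apply, lift.tmul, LinearMap.mk₂_apply]
  rfl

/-- The pairing `(x⊗a, y⊗b) ↦ (x|y)·overline{b da}` is a well-defined alternating
2-cocycle on the loop algebra `g ⊗ A`, so the corresponding central extension
`(g ⊗ A) ⊕ 𝒦'` is a Lie algebra. -/
theorem stmt4 (g : Type) [LieRing g] [LieAlgebra ℂ g] [FiniteDimensional ℂ g]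
    (B : g →ₗ[ℂ] g →ₗ[ℂ] ℂ)
    (hsymm : ∀ x y : g, B x y = B y x)
    (hinv : ∀ x y z : g, B ⁅x, y⁆ z = B x ⁅y, z⁆) :
    ∃ τ : (A2 ⊗[ℂ] g) →ₗ[ℂ] (A2 ⊗[ℂ] g) →ₗ[ℂ] Kq,
      (∀ (a b : A2) (x y : g),
        τ (a ⊗ₜ x) (b ⊗ₜ y) = B x y • mkK (b • KaehlerDifferential.D ℂ A2 a)) ∧
      (∀ u : A2 ⊗[ℂ] g, τ u u = 0) ∧
      (∀ u v w : A2 ⊗[ℂ] g, τ ⁅u, v⁆ w + τ ⁅v, w⁆ u + τ ⁅w, u⁆ v = 0) := by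
  have Lz : ∀ v : A2 ⊗[ℂ] g, ⁅(0 : A2 ⊗[ℂ] g), v⁆ = 0 :=
    fun v => zero_lie (L := A2 ⊗[ℂ] g) (M := A2 ⊗[ℂ] g) v
  have Rz : ∀ v : A2 ⊗[ℂ] g, ⁅v, (0 : A2 ⊗[ℂ] g)⁆ = 0 :=
    fun v => lie_zero (L := A2 ⊗[ℂ] g) (M := A2 ⊗[ℂ] g) v
  have La : ∀ u₁ u₂ v : A2 ⊗[ℂ] g, ⁅u₁ + u₂, v⁆ = ⁅u₁, v⁆ + ⁅u₂, v⁆ :=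
    fun u₁ u₂ v => add_lie (L := A2 ⊗[ℂ] g) (M := A2 ⊗[ℂ] g) u₁ u₂ v
  have Ra : ∀ v u₁ u₂ : A2 ⊗[ℂ] g, ⁅v, u₁ + u₂⁆ = ⁅v, u₁⁆ + ⁅v, u₂⁆ :=
    fun v u₁ u₂ => lie_add (L := A2 ⊗[ℂ] g) (M := A2 ⊗[ℂ] g) v u₁ u₂
  refine ⟨tauAux B, tauAux_tmul B, ?_, ?_⟩
  case _ =>
    have hskew : ∀ u v : A2 ⊗[ℂ] g, tauAux B u v + tauAux B v u = 0 := by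
      intro u v
      induction u using TensorProduct.induction_on with
      | zero => simp
      | tmul a x =>
        induction v using TensorProduct.induction_on with
        | zero => simp
        | tmul b y =>
          rw [tauAux_tmul, tauAux_tmul, hsymm y x, ← smul_add, ← map_add,
            add_comm (b • KaehlerDifferential.D ℂ A2 a) (a • KaehlerDifferential.D ℂ A2 b),
            ← Derivation.leibniz, mkK_D, smul_zero]
        | add v₁ v₂ h1 h2 =>
          have key : (0 : Kq) =
              (tauAux B (a ⊗ₜ[ℂ] x) v₁ + tauAux B v₁ (a ⊗ₜ[ℂ] x)) +
              (tauAux B (a ⊗ₜ[ℂ] x) v₂ + tauAux B v₂ (a ⊗ₜ[ℂ] x)) := by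
            rw [h1, h2, add_zero]
          simp only [map_add, LinearMap.add_apply]
          rw [key]; abel
      | add u₁ u₂ h1 h2 =>
        have key : (0 : Kq) =
            (tauAux B u₁ v + tauAux B v u₁) + (tauAux B u₂ v + tauAux B v u₂) := by
          rw [h1, h2, add_zero]
        simp only [map_add, LinearMap.add_apply]
        rw [key]; abel
    intro u
    have h := hskew u u
    have h2 : (2 : ℂ) • tauAux B u u = 0 := by rw [two_smul]; exact h
    exact (smul_eq_zero.mp h2).resolve_left two_ne_zero
  case _ =>
    intro u v w
    induction u using TensorProduct.induction_on with
    | zero => simp [Lz, Rz]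
    | add u₁ u₂ h1 h2 =>
      have key : (0 : Kq) =
          (tauAux B ⁅u₁, v⁆ w + tauAux B ⁅v, w⁆ u₁ + tauAux B ⁅w, u₁⁆ v) +
          (tauAux B ⁅u₂, v⁆ w + tauAux B ⁅v, w⁆ u₂ + tauAux B ⁅w, u₂⁆ v) := by
        rw [h1, h2, add_zero]
      simp only [La, Ra, map_add, LinearMap.add_apply]
      rw [key]; abel
    | tmul a x =>
      induction v using TensorProduct.induction_on with
      | zero => simp [Lz, Rz]
      | add v₁ v₂ h1 h2 =>
        have key : (0 : Kq) =
            (tauAux B ⁅a ⊗ₜ[ℂ] x, v₁⁆ w + tauAux B ⁅v₁, w⁆ (a ⊗ₜ[ℂ] x) + tauAux B ⁅w, a ⊗ₜ[ℂ] x⁆ v₁) +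
            (tauAux B ⁅a ⊗ₜ[ℂ] x, v₂⁆ w + tauAux B ⁅v₂, w⁆ (a ⊗ₜ[ℂ] x) + tauAux B ⁅w, a ⊗ₜ[ℂ] x⁆ v₂) := by
          rw [h1, h2, add_zero]
        simp only [La, Ra, map_add, LinearMap.add_apply]
        rw [key]; abel
      | tmul b y =>
        induction w using TensorProduct.induction_on with
        | zero => simp [Lz, Rz]
        | add w₁ w₂ h1 h2 =>
          have key : (0 : Kq) =
              (tauAux B ⁅a ⊗ₜ[ℂ] x, b ⊗ₜ[ℂ] y⁆ w₁ + tauAux B ⁅b ⊗ₜ[ℂ] y, w₁⁆ (a ⊗ₜ[ℂ] x) + tauAux B ⁅w₁, a ⊗ₜ[ℂ] x⁆ (b ⊗ₜ[ℂ] y)) +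
              (tauAux B ⁅a ⊗ₜ[ℂ] x, b ⊗ₜ[ℂ] y⁆ w₂ + tauAux B ⁅b ⊗ₜ[ℂ] y, w₂⁆ (a ⊗ₜ[ℂ] x) + tauAux B ⁅w₂, a ⊗ₜ[ℂ] x⁆ (b ⊗ₜ[ℂ] y)) := by
            rw [h1, h2, add_zero]
          simp only [La, Ra, map_add, LinearMap.add_apply]
          rw [key]; abel
        | tmul c z =>
          rw [LieAlgebra.ExtendScalars.bracket_tmul, LieAlgebra.ExtendScalars.bracket_tmul,
            LieAlgebra.ExtendScalars.bracket_tmul, tauAux_tmul, tauAux_tmul, tauAux_tmul]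
          have e1 : B ⁅y, z⁆ x = B ⁅x, y⁆ z := by rw [hsymm, ← hinv]
          have e2 : B ⁅z, x⁆ y = B ⁅x, y⁆ z := by rw [hinv, hsymm]
          rw [e1, e2, ← smul_add, ← smul_add, ← map_add, ← map_add]
          have key : c • KaehlerDifferential.D ℂ A2 (a * b) +
              a • KaehlerDifferential.D ℂ A2 (b * c) +
              b • KaehlerDifferential.D ℂ A2 (c * a) =
              (2 : ℂ) • KaehlerDifferential.D ℂ A2 (a * b * c) := by
            have l1 := Derivation.leibniz (KaehlerDifferential.D ℂ A2) a b
            have l2 := Derivation.leibniz (KaehlerDifferential.D ℂ A2) b c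
            have l3 := Derivation.leibniz (KaehlerDifferential.D ℂ A2) c a
            have l4 := Derivation.leibniz (KaehlerDifferential.D ℂ A2) (a * b) c
            rw [l1, l2, l3, l4, two_smul, l1]
            module
          rw [key, map_smul, mkK_D, smul_zero, smul_zero]
end
end
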